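/- For fixed a, b, x > 0, the binomial distribution satisfies P( Bin(⌊an⌋, b/n) > x·ln n / ln ln n ) ≥ n^{−x + o(1)} as n → ∞; that is, ln P(Bin(⌊an⌋, b/n) > x ln n / ln ln n) / ln n → −x. -/

import Mathlib

open Filter Real Nat

/-- `binomTail m p t` is `P(Bin(m, p) > t)`, written explicitly via the binomial distribution. -/
noncomputable def binomTail (m : ℕ) (p : ℝ) (t : ℝ) : ℝ :=
  ∑ k ∈ Finset.range (m + 1),
    if t < (k : ℝ) then (m.choose k : ℝ) * p ^ k * (1 - p) ^ (m - k) else 0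


lemma aux_self_div_log : Tendsto (fun y : ℝ => y / Real.log y) atTop atTop := by
  have h0 : Tendsto (fun y : ℝ => Real.log y / y) atTop (nhds 0) :=
    Real.isLittleO_log_id_atTop.tendsto_div_nhds_zero
  have h1 : Tendsto (fun y : ℝ => Real.log y / y) atTop (nhdsWithin 0 (Set.Ioi 0)) := by
    refine tendsto_nhdsWithin_of_tendsto_nhds_of_eventually_within _ h0 ?_
    filter_upwards [eventually_gt_atTop (1:ℝ)] with y hy
    exact div_pos (Real.log_pos hy) (by linarith)
  refine h1.inv_tendsto_nhdsGT_zero.congr' ?_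
  filter_upwards [eventually_gt_atTop (1:ℝ)] with y hy
  simp [Pi.inv_apply, one_div, inv_div]

lemma tendsto_L : Tendsto (fun n : ℕ => Real.log n) atTop atTop :=
  Real.tendsto_log_atTop.comp tendsto_natCast_atTop_atTop

lemma tendsto_LL : Tendsto (fun n : ℕ => Real.log (Real.log n)) atTop atTop :=
  Real.tendsto_log_atTop.comp tendsto_L

noncomputable def kk (x : ℝ) (n : ℕ) : ℕ := ⌊x * Real.log n / Real.log (Real.log n)⌋₊ + 1

lemma tendsto_t {x : ℝ} (hx : 0 < x) :
    Tendsto (fun n : ℕ => x * Real.log n / Real.log (Real.log n)) atTop atTop := by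
  have := (aux_self_div_log.comp tendsto_L).const_mul_atTop hx
  refine this.congr fun n => ?_
  simp only [Function.comp_apply]
  ring

lemma t_lt_kk (x : ℝ) (n : ℕ) :
    x * Real.log n / Real.log (Real.log n) < (kk x n : ℝ) := by
  have := Nat.lt_floor_add_one (x * Real.log n / Real.log (Real.log n))
  simpa [kk] using this

lemma kk_le_t_add_one {x : ℝ} {n : ℕ} (h : 0 ≤ x * Real.log n / Real.log (Real.log n)) :
    (kk x n : ℝ) ≤ x * Real.log n / Real.log (Real.log n) + 1 := by
  have := Nat.floor_le h
  simp only [kk]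
  push_cast
  linarith

lemma tendsto_kk {x : ℝ} (hx : 0 < x) : Tendsto (fun n : ℕ => (kk x n : ℝ)) atTop atTop := by
  refine tendsto_atTop_mono (fun n => (t_lt_kk x n).le) (tendsto_t hx)

lemma aux_log_div_self : Tendsto (fun y : ℝ => Real.log y / y) atTop (nhds 0) :=
  Real.isLittleO_log_id_atTop.tendsto_div_nhds_zero

lemma kk_pos (x : ℝ) (n : ℕ) : 0 < kk x n := Nat.succ_pos _

lemma kk_div_L {x : ℝ} (hx : 0 < x) :
    Tendsto (fun n : ℕ => (kk x n : ℝ) / Real.log n) atTop (nhds 0) := by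
  have hub : Tendsto (fun n : ℕ => x / Real.log (Real.log n) + 1 / Real.log n) atTop (nhds 0) := by
    have h1 := tendsto_LL.inv_tendsto_atTop.const_mul x
    have h2 := tendsto_L.inv_tendsto_atTop
    have := h1.add h2
    simpa [div_eq_mul_inv, one_mul] using this
  refine tendsto_of_tendsto_of_tendsto_of_le_of_le' tendsto_const_nhds hub ?_ ?_
  · filter_upwards [tendsto_L.eventually_gt_atTop 0] with n hL
    positivity
  · filter_upwards [tendsto_L.eventually_gt_atTop 0, tendsto_LL.eventually_gt_atTop 0] with n hL hLL
    have ht : 0 ≤ x * Real.log n / Real.log (Real.log n) := by positivity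
    have h := kk_le_t_add_one (x := x) (n := n) ht
    rw [div_le_iff₀ hL]
    calc (kk x n : ℝ) ≤ x * Real.log n / Real.log (Real.log n) + 1 := h
    _ = (x / Real.log (Real.log n)) * Real.log n + 1 := by ring
    _ ≤ (x / Real.log (Real.log n) + 1 / Real.log n) * Real.log n := by
        rw [add_mul, one_div_mul_cancel hL.ne']

lemma kk_div_t {x : ℝ} (hx : 0 < x) :
    Tendsto (fun n : ℕ => (kk x n : ℝ) / (x * Real.log n / Real.log (Real.log n)))
      atTop (nhds 1) := by
  have hub : Tendsto (fun n : ℕ => 1 + 1 / (x * Real.log n / Real.log (Real.log n)))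
      atTop (nhds 1) := by
    have := (tendsto_t hx).inv_tendsto_atTop
    simpa [div_eq_mul_inv, one_mul] using
      ((tendsto_const_nhds : Tendsto (fun _ : ℕ => (1:ℝ)) atTop (nhds 1)).add this)
  refine tendsto_of_tendsto_of_tendsto_of_le_of_le' tendsto_const_nhds hub ?_ ?_
  · filter_upwards [(tendsto_t hx).eventually_gt_atTop 0] with n ht
    rw [le_div_iff₀ ht, one_mul]
    exact (t_lt_kk x n).le
  · filter_upwards [(tendsto_t hx).eventually_gt_atTop 0] with n ht
    rw [div_le_iff₀ ht, add_mul, one_mul, one_div_mul_cancel ht.ne']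
    exact kk_le_t_add_one ht.le

lemma log_t_div_LL {x : ℝ} (hx : 0 < x) :
    Tendsto (fun n : ℕ => Real.log (x * Real.log n / Real.log (Real.log n)) /
      Real.log (Real.log n)) atTop (nhds 1) := by
  have key : Tendsto (fun n : ℕ => Real.log x / Real.log (Real.log n) + 1 -
      Real.log (Real.log (Real.log n)) / Real.log (Real.log n)) atTop (nhds 1) := by
    have h1 : Tendsto (fun n : ℕ => Real.log x / Real.log (Real.log n)) atTop (nhds 0) := by
      simpa [div_eq_mul_inv] using tendsto_LL.inv_tendsto_atTop.const_mul (Real.log x)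
    have h2 := aux_log_div_self.comp tendsto_LL
    have h3 := (h1.add (tendsto_const_nhds : Tendsto (fun _ : ℕ => (1:ℝ)) atTop (nhds 1))).sub h2
    simpa using h3
  refine key.congr' ?_
  filter_upwards [tendsto_L.eventually_gt_atTop 0, tendsto_LL.eventually_gt_atTop 0] with n hL hLL
  have : Real.log (x * Real.log n / Real.log (Real.log n)) =
      Real.log x + Real.log (Real.log n) - Real.log (Real.log (Real.log n)) := by
    rw [Real.log_div (by positivity) (by positivity), Real.log_mul (ne_of_gt hx) (ne_of_gt hL)]
  rw [this]
  field_simp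

lemma log_kk_div_LL {x : ℝ} (hx : 0 < x) :
    Tendsto (fun n : ℕ => Real.log (kk x n) / Real.log (Real.log n)) atTop (nhds 1) := by
  have hdiff : Tendsto (fun n : ℕ => (Real.log (kk x n) -
      Real.log (x * Real.log n / Real.log (Real.log n))) / Real.log (Real.log n))
      atTop (nhds 0) := by
    have hub := (tendsto_t hx).inv_tendsto_atTop
    refine tendsto_of_tendsto_of_tendsto_of_le_of_le' tendsto_const_nhds hub ?_ ?_
    · filter_upwards [(tendsto_t hx).eventually_gt_atTop 0, tendsto_LL.eventually_gt_atTop 0]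
        with n ht hLL
      have hlog : Real.log (x * Real.log n / Real.log (Real.log n)) ≤ Real.log (kk x n) :=
        Real.log_le_log ht (t_lt_kk x n).le
      have h0 := sub_nonneg.mpr hlog
      positivity
    · filter_upwards [(tendsto_t hx).eventually_gt_atTop 0, tendsto_LL.eventually_ge_atTop 1]
        with n ht hLL
      set tn := x * Real.log n / Real.log (Real.log n) with htn
      have hksucc : Real.log (kk x n) ≤ Real.log (tn + 1) :=
        Real.log_le_log (by exact_mod_cast kk_pos x n) (kk_le_t_add_one ht.le)
      have hsub : Real.log (tn + 1) - Real.log tn ≤ tn⁻¹ := by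
        rw [← Real.log_div (by positivity) ht.ne']
        have h1 := Real.log_le_sub_one_of_pos (show 0 < (tn + 1)/tn by positivity)
        calc Real.log ((tn+1)/tn) ≤ (tn+1)/tn - 1 := h1
        _ = tn⁻¹ := by field_simp; ring
      have hnn : 0 ≤ Real.log (kk x n) - Real.log tn := by
        have := Real.log_le_log ht (t_lt_kk x n).le
        linarith
      calc (Real.log (kk x n) - Real.log tn) / Real.log (Real.log n)
          ≤ Real.log (kk x n) - Real.log tn := div_le_self hnn hLL
      _ ≤ tn⁻¹ := by linarith
  have h := (log_t_div_LL hx).add hdiff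
  rw [show (1:ℝ) + 0 = 1 by ring] at h
  refine h.congr fun n => ?_
  rw [← add_div]
  ring_nf

lemma kk_mul_log_div_L {x : ℝ} (hx : 0 < x) :
    Tendsto (fun n : ℕ => (kk x n : ℝ) * Real.log (kk x n) / Real.log n) atTop (nhds x) := by
  have h := ((kk_div_t hx).mul (log_kk_div_LL hx)).const_mul x
  rw [show x * (1 * 1) = x by ring] at h
  refine h.congr' ?_
  filter_upwards [tendsto_L.eventually_gt_atTop 0, tendsto_LL.eventually_gt_atTop 0] with n hL hLL
  field_simp

lemma my_pow_div_factorial_le_exp (k : ℕ) : (k : ℝ) ^ k / k ! ≤ Real.exp k := by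
  have hsum := Real.sum_le_exp_of_nonneg (x := (k:ℝ)) (Nat.cast_nonneg k) (k + 1)
  have hsingle : (k:ℝ) ^ k / k ! ≤ ∑ i ∈ Finset.range (k+1), (k:ℝ) ^ i / i ! := by
    refine Finset.single_le_sum (f := fun i => (k:ℝ) ^ i / i !) (fun i _ => by positivity) ?_
    simp
  linarith

lemma geom_ite_sum_le (k N : ℕ) :
    ∑ j ∈ Finset.range N, (if k ≤ j then ((1:ℝ)/2) ^ (j - k) else 0) ≤ 2 := by
  classical
  have hsub : Finset.Ico k N ⊆ Finset.range N := by
    intro j hj; simp only [Finset.mem_Ico] at hj; exact Finset.mem_range.mpr hj.2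
  have heq : ∑ j ∈ Finset.range N, (if k ≤ j then ((1:ℝ)/2) ^ (j - k) else 0)
      = ∑ j ∈ Finset.Ico k N, (if k ≤ j then ((1:ℝ)/2) ^ (j - k) else 0) := by
    refine (Finset.sum_subset hsub ?_).symm
    intro j hj hnot
    rw [if_neg]
    intro hk
    exact hnot (Finset.mem_Ico.mpr ⟨hk, Finset.mem_range.mp hj⟩)
  rw [heq]
  have heq2 : ∑ j ∈ Finset.Ico k N, (if k ≤ j then ((1:ℝ)/2) ^ (j - k) else 0)
      = ∑ i ∈ Finset.range (N - k), ((1:ℝ)/2) ^ i := by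
    rw [Finset.sum_Ico_eq_sum_range]
    refine Finset.sum_congr rfl fun i _ => ?_
    rw [if_pos (Nat.le_add_right k i), Nat.add_sub_cancel_left]
  rw [heq2]
  exact sum_geometric_two_le _

lemma ratio_bound {c : ℝ} (hc : 0 < c) {k : ℕ} (hk : 2 * c ≤ k) :
    ∀ d : ℕ, c ^ (k + d) / (k + d)! ≤ c ^ k / k ! * ((1:ℝ)/2) ^ d := by
  intro d
  induction d with
  | zero => simp
  | succ d ih =>
    have hkd : (0:ℝ) < (k + d + 1 : ℕ) := by positivity
    have hstep : c / ((k + d + 1 : ℕ) : ℝ) ≤ 1/2 := by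
      rw [div_le_div_iff₀ hkd (by norm_num)]
      push_cast
      have : (0:ℝ) ≤ d := Nat.cast_nonneg d
      nlinarith
    have : c ^ (k + (d+1)) / (k + (d+1))! = (c ^ (k + d) / (k + d)!) * (c / ((k + d + 1 : ℕ) : ℝ)) := by
      rw [show k + (d+1) = (k+d) + 1 by ring, pow_succ, Nat.factorial_succ]
      push_cast
      field_simp
    rw [this, pow_succ]
    have h1 : c ^ (k + d) / (k + d)! * (c / ((k + d + 1 : ℕ) : ℝ)) ≤
        c ^ (k + d) / (k + d)! * (1/2) :=
      mul_le_mul_of_nonneg_left hstep (by positivity)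
    have h2 : c ^ (k + d) / (k + d)! * (1/2) ≤ c ^ k / k ! * ((1:ℝ)/2) ^ d * (1/2) :=
      mul_le_mul_of_nonneg_right ih (by norm_num)
    linarith

lemma binomTail_le {m k : ℕ} {p c t : ℝ} (hp0 : 0 ≤ p) (hp1 : p ≤ 1)
    (ht0 : 0 ≤ t) (hk : ∀ j : ℕ, t < (j:ℝ) → k ≤ j)
    (hc : (m:ℝ) * p ≤ c) (hc0 : 0 < c) (hck : 2 * c ≤ k) :
    binomTail m p t ≤ 2 * (c ^ k / k !) := by
  have hterm : ∀ j ∈ Finset.range (m+1),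
      (if t < (j:ℝ) then (m.choose j : ℝ) * p ^ j * (1 - p) ^ (m - j) else 0)
        ≤ (if k ≤ j then c ^ k / k ! * ((1:ℝ)/2) ^ (j - k) else 0) := by
    intro j _
    by_cases hj : t < (j:ℝ)
    · rw [if_pos hj, if_pos (hk j hj)]
      have h1 : (m.choose j : ℝ) * p ^ j * (1 - p) ^ (m - j) ≤ (m.choose j : ℝ) * p ^ j := by
        have := pow_le_one₀ (by linarith : (0:ℝ) ≤ 1 - p) (by linarith : 1 - p ≤ 1) (n := m - j)
        nlinarith [mul_nonneg (Nat.cast_nonneg (m.choose j)) (pow_nonneg hp0 j)]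
      have h2 : (m.choose j : ℝ) * p ^ j ≤ ((m:ℝ) ^ j / j !) * p ^ j :=
        mul_le_mul_of_nonneg_right (Nat.choose_le_pow_div j m) (pow_nonneg hp0 j)
      have h3 : ((m:ℝ) ^ j / j !) * p ^ j = ((m:ℝ) * p) ^ j / j ! := by
        rw [mul_pow]; ring
      have h4 : ((m:ℝ) * p) ^ j / j ! ≤ c ^ j / j ! := by
        have := pow_le_pow_left₀ (mul_nonneg (Nat.cast_nonneg m) hp0) hc j
        have hf : (0:ℝ) < j ! := by positivity
        exact div_le_div_of_nonneg_right this hf.le |>.trans_eq rfl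
      have h5 : c ^ j / j ! ≤ c ^ k / k ! * ((1:ℝ)/2) ^ (j - k) := by
        obtain ⟨d, rfl⟩ := Nat.exists_eq_add_of_le (hk j hj)
        rw [Nat.add_sub_cancel_left]
        exact ratio_bound hc0 hck d
      linarith
    · rw [if_neg hj]
      positivity
  have hsum := Finset.sum_le_sum hterm
  have hfinal : ∑ j ∈ Finset.range (m+1), (if k ≤ j then c ^ k / k ! * ((1:ℝ)/2) ^ (j - k) else 0)
      ≤ c ^ k / k ! * 2 := by
    have : ∑ j ∈ Finset.range (m+1), (if k ≤ j then c ^ k / k ! * ((1:ℝ)/2) ^ (j - k) else 0)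
        = c ^ k / k ! * ∑ j ∈ Finset.range (m+1), (if k ≤ j then ((1:ℝ)/2) ^ (j - k) else 0) := by
      rw [Finset.mul_sum]
      refine Finset.sum_congr rfl fun j _ => ?_
      split_ifs <;> ring
    rw [this]
    exact mul_le_mul_of_nonneg_left (geom_ite_sum_le k (m+1)) (by positivity)
  calc binomTail m p t ≤ _ := hsum
  _ ≤ c ^ k / k ! * 2 := hfinal
  _ = 2 * (c ^ k / k !) := by ring

lemma le_binomTail {m k : ℕ} {p t : ℝ} (hp0 : 0 ≤ p) (hp1 : p ≤ 1) (hkm : k ≤ m)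
    (htk : t < (k:ℝ)) :
    (m.choose k : ℝ) * p ^ k * (1 - p) ^ (m - k) ≤ binomTail m p t := by
  have := Finset.single_le_sum
    (f := fun j : ℕ => if t < (j:ℝ) then (m.choose j : ℝ) * p ^ j * (1 - p) ^ (m - j) else 0)
    (fun j _ => by split_ifs with h
                   · exact mul_nonneg (mul_nonneg (Nat.cast_nonneg _) (pow_nonneg hp0 _))
                       (pow_nonneg (by linarith) _)
                   · exact le_rfl) (Finset.mem_range.mpr (Nat.lt_succ_of_le hkm))
  simpa [binomTail, htk] using this


set_option maxHeartbeats 2000000 in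
theorem stmt_10 (a b x : ℝ) (ha : 0 < a) (hb : 0 < b) (hx : 0 < x) :
    Tendsto (fun n : ℕ =>
        Real.log (binomTail ⌊a * (n : ℝ)⌋₊ (b / n)
            (x * Real.log n / Real.log (Real.log n))) / Real.log n)
      atTop (nhds (-x)) := by
  obtain ⟨c, hc⟩ : ∃ c : ℝ, c = a * b := ⟨_, rfl⟩
  have hc0 : 0 < c := hc ▸ mul_pos ha hb
  -- lower and upper comparison sequences
  have hlowT : Tendsto (fun n : ℕ =>
      ((kk x n : ℝ) * Real.log (c/2) - (kk x n : ℝ) * Real.log (kk x n) - 2*c) / Real.log n)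
      atTop (nhds (-x)) := by
    have h1 := (kk_div_L hx).const_mul (Real.log (c/2))
    have h2 := kk_mul_log_div_L hx
    have h3 := tendsto_L.inv_tendsto_atTop.const_mul (2*c)
    have h := (h1.sub h2).sub h3
    rw [show Real.log (c/2) * 0 - x - 2*c*0 = -x by ring] at h
    refine h.congr fun n => ?_
    simp only [Pi.inv_apply]
    ring
  have hupT : Tendsto (fun n : ℕ =>
      (Real.log 2 + (kk x n : ℝ) * Real.log c + (kk x n : ℝ)
        - (kk x n : ℝ) * Real.log (kk x n)) / Real.log n)
      atTop (nhds (-x)) := by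
    have h1 := tendsto_L.inv_tendsto_atTop.const_mul (Real.log 2)
    have h2 := (kk_div_L hx).const_mul (Real.log c)
    have h3 := kk_div_L hx
    have h4 := kk_mul_log_div_L hx
    have h := ((h1.add h2).add h3).sub h4
    rw [show Real.log 2 * 0 + Real.log c * 0 + 0 - x = -x by ring] at h
    refine h.congr fun n => ?_
    simp only [Pi.inv_apply]
    ring
  -- eventual two-sided bound
  have hq : Tendsto (fun n : ℕ => (1 + Real.log n) / n) atTop (nhds 0) := by
    have h1 := (tendsto_natCast_atTop_atTop (R := ℝ)).inv_tendsto_atTop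
    have h2 := aux_log_div_self.comp (tendsto_natCast_atTop_atTop (R := ℝ))
    have h := h1.add h2
    rw [show (0:ℝ) + 0 = 0 by ring] at h
    refine h.congr fun n => ?_
    simp only [Function.comp_apply, Pi.inv_apply]
    rw [_root_.add_div, one_div]
  have hbound : ∀ᶠ n : ℕ in atTop,
      ((kk x n : ℝ) * Real.log (c/2) - (kk x n : ℝ) * Real.log (kk x n) - 2*c) / Real.log n
        ≤ Real.log (binomTail ⌊a * (n : ℝ)⌋₊ (b / n)
            (x * Real.log n / Real.log (Real.log n))) / Real.log n ∧
      Real.log (binomTail ⌊a * (n : ℝ)⌋₊ (b / n)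
            (x * Real.log n / Real.log (Real.log n))) / Real.log n
        ≤ (Real.log 2 + (kk x n : ℝ) * Real.log c + (kk x n : ℝ)
            - (kk x n : ℝ) * Real.log (kk x n)) / Real.log n := by
    filter_upwards [(tendsto_natCast_atTop_atTop (R := ℝ)).eventually_ge_atTop 1,
      (tendsto_natCast_atTop_atTop (R := ℝ)).eventually_ge_atTop (2*b),
      tendsto_L.eventually_ge_atTop 1,
      (kk_div_L hx).eventually_lt_const one_pos,
      hq.eventually_lt_const (half_pos ha),
      (tendsto_kk hx).eventually_ge_atTop (2*c),
      (tendsto_t hx).eventually_gt_atTop 0]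
      with n hn1 hn2b hL1 hkL hLn h2c ht0
    set L : ℝ := Real.log n with hLdef
    set t : ℝ := x * Real.log n / Real.log (Real.log n) with htdef
    set k : ℕ := kk x n with hkdef
    set m : ℕ := ⌊a * (n : ℝ)⌋₊ with hmdef
    set p : ℝ := b / n with hpdef
    have hn0 : (0:ℝ) < n := lt_of_lt_of_le one_pos hn1
    have hL0 : (0:ℝ) < L := lt_of_lt_of_le one_pos hL1
    have hp0 : 0 < p := div_pos hb hn0
    have hp_half : p ≤ 1/2 := by
      rw [hpdef, div_le_iff₀ hn0]; linarith
    have hp1 : p ≤ 1 := hp_half.trans (by norm_num)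
    have hm_ub : (m:ℝ) ≤ a * n := Nat.floor_le (by positivity)
    have hm_lb : a * n - 1 < (m:ℝ) := by
      have := Nat.lt_floor_add_one (a * (n:ℝ))
      push_cast at this ⊢
      linarith
    have hkkL : (k:ℝ) ≤ L := by
      have := hkL
      rw [div_lt_one hL0] at this
      exact this.le
    have hLan : 1 + L < a/2 * n := by
      have := hLn
      rwa [div_lt_iff₀ hn0] at this
    have hkm : k ≤ m := by
      have h0 : (0:ℝ) ≤ a/2 * n := by positivity
      have h1 : (k:ℝ) ≤ (m:ℝ) := by linarith
      exact_mod_cast h1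
    have hmp : (m:ℝ) * p ≤ c := by
      have h1 : (m:ℝ) * p ≤ (a * n) * p := mul_le_mul_of_nonneg_right hm_ub hp0.le
      have h2 : (a * n) * p = c := by
        rw [hpdef, hc]; field_simp
      linarith
    have hkt : t < (k:ℝ) := t_lt_kk x n
    have hjk : ∀ j : ℕ, t < (j:ℝ) → k ≤ j := by
      intro j hj
      have : ⌊t⌋₊ < j := (Nat.floor_lt ht0.le).mpr hj
      exact this
    have hk1 : 1 ≤ k := kk_pos x n
    have hk0R : (0:ℝ) < k := by exact_mod_cast hk1
    -- lower bound on the key term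
    have hm1k : ((m + 1 - k : ℕ) : ℝ) = (m:ℝ) + 1 - k := by
      have : k ≤ m + 1 := hkm.trans (Nat.le_succ m)
      push_cast [Nat.cast_sub this]
      ring
    have hm1p : c/2 ≤ ((m + 1 - k : ℕ) : ℝ) * p := by
      have hLbn : L * p ≤ c/2 := by
        have h1 : L * p = (L / n) * b := by rw [hpdef]; field_simp
        have h2 : L / n ≤ a / 2 := by
          rw [div_le_iff₀ hn0]; nlinarith
        rw [h1, hc]
        calc L / n * b ≤ (a/2) * b := mul_le_mul_of_nonneg_right h2 hb.le
        _ = a * b / 2 := by ring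
      have h3 : a * n - L ≤ ((m + 1 - k : ℕ) : ℝ) := by
        rw [hm1k]; linarith [hkkL, hm_lb]
      have h4 : (a * n - L) * p = c - L * p := by
        rw [hpdef, hc]; field_simp
      have h5 := mul_le_mul_of_nonneg_right h3 hp0.le
      rw [h4] at h5
      linarith
    have hexp : Real.exp (-(2*c)) ≤ (1 - p) ^ (m - k) := by
      have h1p : (0:ℝ) < 1 - p := by linarith
      have e1 : Real.exp (-(2*p)) ≤ 1 - p := by
        rw [Real.exp_neg]
        have hh := Real.add_one_le_exp (2*p)
        have hep := Real.exp_pos (2*p)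
        have key : 1 ≤ (1-p) * Real.exp (2*p) := by
          nlinarith [mul_le_mul_of_nonneg_left hh (by linarith : (0:ℝ) ≤ 1-p)]
        rw [inv_eq_one_div, div_le_iff₀ hep]
        linarith
      have e2 : Real.exp (-(2*p)) ^ (m - k) ≤ (1 - p) ^ (m - k) :=
        pow_le_pow_left₀ (Real.exp_pos _).le e1 _
      have e3 : Real.exp (-(2*c)) ≤ Real.exp (-(2*p)) ^ (m - k) := by
        rw [← Real.exp_nat_mul]
        apply Real.exp_le_exp.mpr
        have hmk : ((m - k : ℕ) : ℝ) ≤ (m:ℝ) := by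
          exact_mod_cast Nat.cast_le.mpr (Nat.sub_le m k)
        have h6 : ((m - k : ℕ) : ℝ) * (2*p) ≤ (m:ℝ) * (2*p) :=
          mul_le_mul_of_nonneg_right hmk (by positivity)
        have h7 : (m:ℝ) * (2*p) = 2 * ((m:ℝ) * p) := by ring
        rw [mul_neg]
        linarith
      exact e3.trans e2
    have hkfac0 : (0:ℝ) < (k ! : ℝ) := by positivity
    have hkkpow0 : (0:ℝ) < (k:ℝ)^k := by positivity
    have hfacpow : (k ! : ℝ) ≤ (k:ℝ)^k := by
      exact_mod_cast Nat.factorial_le_pow k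
    have hB_le : (c/2)^k / (k:ℝ)^k * Real.exp (-(2*c))
        ≤ (m.choose k : ℝ) * p ^ k * (1 - p) ^ (m - k) := by
      have s1 : (c/2)^k ≤ (((m + 1 - k : ℕ) : ℝ) * p)^k :=
        pow_le_pow_left₀ (by positivity) hm1p k
      have t1 : (c/2)^k / (k:ℝ)^k ≤ (((m + 1 - k : ℕ) : ℝ) * p)^k / (k ! : ℝ) :=
        div_le_div₀ (by positivity) s1 hkfac0 hfacpow
      have t2 : (c/2)^k / (k:ℝ)^k * Real.exp (-(2*c))
          ≤ (((m + 1 - k : ℕ) : ℝ) * p)^k / (k ! : ℝ) * ((1 - p) ^ (m - k)) :=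
        mul_le_mul t1 hexp (Real.exp_pos _).le (by positivity)
      have t3 : (((m + 1 - k : ℕ) : ℝ) * p)^k / (k ! : ℝ)
          = (((m + 1 - k : ℕ) : ℝ)^k / (k ! : ℝ)) * p ^ k := by
        rw [mul_pow]; ring
      have t4 : (((m + 1 - k : ℕ) : ℝ)^k / (k ! : ℝ)) ≤ (m.choose k : ℝ) := by
        have := Nat.pow_le_choose (α := ℝ) k m
        exact_mod_cast this
      have t5 : (((m + 1 - k : ℕ) : ℝ) * p)^k / (k ! : ℝ) * ((1 - p) ^ (m - k))
          ≤ (m.choose k : ℝ) * p ^ k * (1 - p) ^ (m - k) := by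
        rw [t3]
        have := mul_le_mul_of_nonneg_right t4 (pow_nonneg hp0.le k)
        have h1p : (0:ℝ) ≤ 1 - p := by linarith
        exact mul_le_mul_of_nonneg_right this (pow_nonneg h1p _)
      linarith
    have hB_pos : (0:ℝ) < (c/2)^k / (k:ℝ)^k * Real.exp (-(2*c)) := by positivity
    have hterm_le := le_binomTail hp0.le hp1 hkm hkt
    have hBtail : (c/2)^k / (k:ℝ)^k * Real.exp (-(2*c)) ≤ binomTail m p t :=
      hB_le.trans hterm_le
    have hpos : 0 < binomTail m p t := lt_of_lt_of_le hB_pos hBtail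
    -- upper bound
    have hub := binomTail_le (k := k) hp0.le hp1 ht0.le hjk hmp hc0 h2c
    -- take logs
    have hlogB : Real.log ((c/2)^k / (k:ℝ)^k * Real.exp (-(2*c)))
        = (k:ℝ) * Real.log (c/2) - (k:ℝ) * Real.log k - 2*c := by
      rw [Real.log_mul (by positivity) (Real.exp_ne_zero _), Real.log_div (by positivity)
        (by positivity), Real.log_pow, Real.log_pow, Real.log_exp]
      push_cast
      ring
    have hlow : (k:ℝ) * Real.log (c/2) - (k:ℝ) * Real.log k - 2*c
        ≤ Real.log (binomTail m p t) := by
      rw [← hlogB]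
      exact Real.log_le_log hB_pos hBtail
    have hfac_low : (k:ℝ) * Real.log k - k ≤ Real.log (k ! : ℝ) := by
      have h1 := my_pow_div_factorial_le_exp k
      have h2 := Real.log_le_log (by positivity : (0:ℝ) < (k:ℝ)^k / (k ! : ℝ)) h1
      rw [Real.log_div (by positivity) (by positivity), Real.log_pow, Real.log_exp] at h2
      push_cast at h2
      linarith
    have hup : Real.log (binomTail m p t)
        ≤ Real.log 2 + (k:ℝ) * Real.log c + (k:ℝ) - (k:ℝ) * Real.log k := by
      have h1 := Real.log_le_log hpos hub
      have h2 : Real.log (2 * (c ^ k / (k ! : ℝ)))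
          = Real.log 2 + (k:ℝ) * Real.log c - Real.log (k ! : ℝ) := by
        rw [Real.log_mul (by norm_num) (by positivity), Real.log_div (by positivity)
          (by positivity), Real.log_pow]
        push_cast
        ring
      rw [h2] at h1
      linarith
    constructor
    · exact div_le_div_of_nonneg_right hlow hL0.le
    · exact div_le_div_of_nonneg_right hup hL0.le
  refine tendsto_of_tendsto_of_tendsto_of_le_of_le' hlowT hupT ?_ ?_
  · filter_upwards [hbound] with n h using h.1
  · filter_upwards [hbound] with n h using h.2
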